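/- A partition λ is a t-core if and only if its t-colored Frobenius partition 𝔊𝔉_t(λ) satisfies: no color appears in both rows, and if the colored entry a_k (value a with color k) appears in a row, then (a−1)_k, (a−2)_k, ..., 1_k, 0_k all appear in the same row. -/
import Mathlib


open Filter

/-- A partition represented as a weakly decreasing, eventually zero sequence of parts
(0-indexed: `f i` is the (i+1)-st part). -/
def IsPartition (f : ℕ → ℕ) : Prop :=
  Antitone f ∧ ∀ᶠ i in atTop, f i = 0

/-- The size `|λ|` of a partition. -/
noncomputable def psize (f : ℕ → ℕ) : ℕ := ∑' i, f i

/-- The conjugate partition: `conj f j` is the number of parts of `f` exceeding `j`,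
i.e. the (j+1)-st column length. -/
noncomputable def conj (f : ℕ → ℕ) : ℕ → ℕ := fun j => Nat.card {i : ℕ // j < f i}

/-- The Durfee square size: the number of indices `i` with `λ_{i+1} ≥ i+1`. -/
noncomputable def durfee (f : ℕ → ℕ) : ℕ := Nat.card {i : ℕ // i < f i}

/-- Top Frobenius entry `a_{i+1} = λ_{i+1} - (i+1)` (0-indexed). -/
noncomputable def frobA (f : ℕ → ℕ) (i : ℕ) : ℕ := f i - (i + 1)

/-- Bottom Frobenius entry `b_{i+1} = λ'_{i+1} - (i+1)` (0-indexed). -/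
noncomputable def frobB (f : ℕ → ℕ) (i : ℕ) : ℕ := conj f i - (i + 1)

/-- Hook length of the (0-indexed) box `(i,j)` (valid when `j < f i`):
`h = (λ_i - j) + (λ'_j - i) - 1` in 1-indexed terms, which equals
`(λ_i - i) + (λ'_j - j) + 1`. -/
noncomputable def hook (f : ℕ → ℕ) (i j : ℕ) : ℕ :=
  (f i - (j + 1)) + (conj f j - (i + 1)) + 1

/-- A `t`-core partition: no hook length divisible by `t`. -/
def IsTCore (t : ℕ) (f : ℕ → ℕ) : Prop :=
  IsPartition f ∧ ∀ i j, j < f i → ¬ t ∣ hook f i j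

namespace Stmt19Aux

lemma seg_card {S : Set ℕ} (hfin : S.Finite)
    (hdc : ∀ ⦃m n : ℕ⦄, m ≤ n → n ∈ S → m ∈ S) (k : ℕ) :
    k ∈ S ↔ k < Nat.card S := by
  rw [Nat.card_coe_set_eq]
  constructor
  · intro hk
    have h1 : (Finset.range (k+1) : Set ℕ) ⊆ S := by
      intro m hm
      simp only [Finset.coe_range, Set.mem_Iio] at hm
      exact hdc (Nat.lt_succ_iff.mp hm) hk
    have h2 := Set.ncard_le_ncard h1 hfin
    rwa [Set.ncard_coe_finset, Finset.card_range] at h2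
  · intro hk
    by_contra hkS
    have h2 : S ⊆ (Finset.range k : Set ℕ) := by
      intro n hn
      simp only [Finset.coe_range, Set.mem_Iio]
      by_contra h
      exact hkS (hdc (Nat.le_of_not_lt h) hn)
    have h3 := Set.ncard_le_ncard h2 (Finset.range k).finite_toSet
    rw [Set.ncard_coe_finset, Finset.card_range] at h3
    omega

variable {f : ℕ → ℕ}

lemma exists_bound (hf : IsPartition f) : ∃ N, ∀ n, N ≤ n → f n = 0 :=
  eventually_atTop.mp hf.2

lemma finite_lt (hf : IsPartition f) (j : ℕ) : {i : ℕ | j < f i}.Finite := by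
  obtain ⟨N, hN⟩ := exists_bound hf
  apply Set.Finite.subset (Set.finite_Iio N)
  intro i hi
  simp only [Set.mem_setOf_eq] at hi
  simp only [Set.mem_Iio]
  by_contra h
  rw [hN i (Nat.le_of_not_lt h)] at hi; omega

lemma galois (hf : IsPartition f) (k j : ℕ) : k < conj f j ↔ j < f k := by
  have h := seg_card (S := {i : ℕ | j < f i}) (finite_lt hf j)
    (fun m n hmn hn => lt_of_lt_of_le hn (hf.1 hmn)) k
  rw [Set.mem_setOf_eq] at h
  exact ((show conj f j = Nat.card {i : ℕ | j < f i} from rfl) ▸ h.symm)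

lemma durfee_lt (hf : IsPartition f) (i : ℕ) : i < durfee f ↔ i < f i := by
  have hfin : {i : ℕ | i < f i}.Finite := by
    apply Set.Finite.subset (finite_lt hf 0)
    intro i hi; simp only [Set.mem_setOf_eq] at *; omega
  have h := seg_card (S := {i : ℕ | i < f i}) hfin
    (fun m n hmn hn => lt_of_lt_of_le (lt_of_le_of_lt hmn hn) (hf.1 hmn)) i
  rw [Set.mem_setOf_eq] at h
  exact ((show durfee f = Nat.card {i : ℕ | i < f i} from rfl) ▸ h.symm)

noncomputable def pI (f : ℕ → ℕ) (k : ℕ) : ℤ := (f k : ℤ) - k - 1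
noncomputable def qI (f : ℕ → ℕ) (j : ℕ) : ℤ := (j : ℤ) - (conj f j : ℤ)

lemma pq_disjoint (hf : IsPartition f) (k j : ℕ) : pI f k ≠ qI f j := by
  intro h
  simp only [pI, qI] at h
  by_cases hb : j < f k
  · have h1 := (galois hf k j).mpr hb
    omega
  · have h1 : ¬ k < conj f j := fun hc => hb ((galois hf k j).mp hc)
    omega

lemma pq_cover (hf : IsPartition f) (x : ℤ) :
    (∃ k, pI f k = x) ∨ (∃ j, qI f j = x) := by
  obtain ⟨N, hN⟩ := exists_bound hf
  set S : Set ℕ := {k : ℕ | x < pI f k} with hS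
  have hfin : S.Finite := by
    apply Set.Finite.subset (Set.finite_Iio (max N ((-x-1).toNat)))
    intro k hk
    simp only [hS, Set.mem_setOf_eq, pI] at hk
    simp only [Set.mem_Iio]
    by_contra h
    push_neg at h
    have h1 : f k = 0 := hN k (le_trans (le_max_left _ _) h)
    have h2 : ((-x-1).toNat : ℕ) ≤ k := le_trans (le_max_right _ _) h
    have h3 : -x-1 ≤ ((-x-1).toNat : ℤ) := Int.self_le_toNat _
    omega
  have hdc : ∀ ⦃m n : ℕ⦄, m ≤ n → n ∈ S → m ∈ S := by
    intro m n hmn hn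
    simp only [hS, Set.mem_setOf_eq, pI] at *
    have := hf.1 hmn
    omega
  set k0 := Nat.card S with hk0
  have hseg : ∀ k, x < pI f k ↔ k < k0 := fun k => seg_card hfin hdc k
  have hle : pI f k0 ≤ x := by
    by_contra h
    push_neg at h
    exact absurd ((hseg k0).mp h) (lt_irrefl _)
  rcases eq_or_lt_of_le hle with heq | hlt
  · exact Or.inl ⟨k0, heq⟩
  · right
    have hx : 0 ≤ x + k0 := by
      simp only [pI] at hlt
      have : (0:ℤ) ≤ (f k0 : ℤ) := Int.natCast_nonneg _
      omega
    refine ⟨(x + k0).toNat, ?_⟩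
    have hjz : ((x + k0).toNat : ℤ) = x + k0 := Int.toNat_of_nonneg hx
    set j := (x + k0).toNat with hj
    have hiff : ∀ k, j < f k ↔ k < k0 := by
      intro k
      constructor
      · intro h
        by_contra hk
        push_neg at hk
        have h2 : f k ≤ f k0 := hf.1 hk
        simp only [pI] at hlt
        omega
      · intro hk
        have hk1 : (1:ℕ) ≤ k0 := by omega
        have h1 : x < pI f (k0 - 1) := (hseg (k0-1)).mpr (by omega)
        have h2 : f (k0 - 1) ≤ f k := hf.1 (by omega)
        simp only [pI] at h1
        omega
    have hconj : conj f j = k0 := by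
      have h1 : ¬ k0 < conj f j := fun h => by
        have := (hiff k0).mp ((galois hf k0 j).mp h); omega
      have h2 : ¬ conj f j < k0 := fun h => by
        have := (galois hf (conj f j) j).mpr ((hiff (conj f j)).mpr h)
        omega
      omega
    simp only [qI, hconj]
    omega

lemma box_iff (hf : IsPartition f) {i j : ℕ} : j < f i ↔ qI f j < pI f i := by
  constructor
  · intro h
    have := (galois hf i j).mpr h
    simp only [pI, qI]; omega
  · intro h
    by_contra hb
    have h1 : ¬ i < conj f j := fun hc => hb ((galois hf i j).mp hc)
    simp only [pI, qI] at h
    omega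

lemma hook_cast (hf : IsPartition f) {i j : ℕ} (h : j < f i) :
    (hook f i j : ℤ) = pI f i - qI f j := by
  have h2 := (galois hf i j).mpr h
  simp only [hook, pI, qI]
  omega

lemma frobA_cast (hf : IsPartition f) {i : ℕ} (hi : i < durfee f) :
    (frobA f i : ℤ) = pI f i := by
  have h := (durfee_lt hf i).mp hi
  simp only [frobA, pI]; omega

lemma frobB_cast (hf : IsPartition f) {j : ℕ} (hj : j < durfee f) :
    (frobB f j : ℤ) = -qI f j - 1 := by
  have h := (galois hf j j).mpr ((durfee_lt hf j).mp hj)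
  simp only [frobB, qI]; omega

lemma pos_lt_durfee (hf : IsPartition f) {k : ℕ} (h : 0 ≤ pI f k) : k < durfee f := by
  rw [durfee_lt hf]
  simp only [pI] at h; omega

lemma neg_lt_durfee (hf : IsPartition f) {j : ℕ} (h : qI f j < 0) : j < durfee f := by
  rw [durfee_lt hf]
  simp only [qI] at h
  have := (galois hf j j).mp (by omega)
  omega

lemma cl_iter (hcl : ∀ i, ∃ k, pI f k = pI f i - t) (m : ℕ) (i : ℕ) :
    ∃ k, pI f k = pI f i - (m : ℤ) * t := by
  induction m with
  | zero => exact ⟨i, by simp⟩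
  | succ n ih =>
    obtain ⟨k, hk⟩ := ih
    obtain ⟨k', hk'⟩ := hcl k
    exact ⟨k', by rw [hk', hk]; push_cast; ring⟩

lemma qcl (hf : IsPartition f) (hcl : ∀ i, ∃ k, pI f k = pI f i - t) (j : ℕ) :
    ∃ j', qI f j' = qI f j + t := by
  rcases pq_cover hf (qI f j + t) with ⟨k, hk⟩ | ⟨j', hj'⟩
  · obtain ⟨k', hk'⟩ := hcl k
    exact absurd (hk'.trans (by rw [hk]; ring)) (pq_disjoint hf k' j)
  · exact ⟨j', hj'⟩

lemma qcl_iter (hf : IsPartition f) (hcl : ∀ i, ∃ k, pI f k = pI f i - t)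
    (m : ℕ) (j : ℕ) : ∃ j', qI f j' = qI f j + (m : ℤ) * t := by
  induction m with
  | zero => exact ⟨j, by simp⟩
  | succ n ih =>
    obtain ⟨j', hj'⟩ := ih
    obtain ⟨j'', hj''⟩ := qcl hf hcl j'
    exact ⟨j'', by rw [hj'', hj']; push_cast; ring⟩

lemma core_iff_cl (hf : IsPartition f) {t : ℕ} (ht : 0 < t) :
    (∀ i j, j < f i → ¬ t ∣ hook f i j) ↔ (∀ i, ∃ k, pI f k = pI f i - t) := by
  constructor
  · intro hcore i
    rcases pq_cover hf (pI f i - t) with h | ⟨j, hj⟩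
    · exact h
    · exfalso
      have hbox : j < f i := by
        rw [box_iff hf, hj]
        have : (0:ℤ) < t := by exact_mod_cast ht
        omega
      apply hcore i j hbox
      have hc := hook_cast hf hbox
      rw [hj] at hc
      have : (hook f i j : ℤ) = t := by rw [hc]; ring
      have : hook f i j = t := by exact_mod_cast this
      rw [this]
  · intro hcl i j hbox hdvd
    obtain ⟨m, hm⟩ := hdvd
    have hc := hook_cast hf hbox
    obtain ⟨k, hk⟩ := cl_iter hcl m i
    apply pq_disjoint hf k j
    rw [hk]
    have : (hook f i j : ℤ) = (m : ℤ) * t := by rw [hm]; push_cast; ring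
    omega

lemma div_mod_aux {t : ℕ} (ht : 0 < t) (c r : ℕ) (hr : r < t) :
    (c * t + r) / t = c ∧ (c * t + r) % t = r := by
  have h1 : c * t + r = r + t * c := by ring
  constructor
  · rw [h1, Nat.add_mul_div_left _ _ ht, Nat.div_eq_of_lt hr, Nat.zero_add]
  · rw [h1, Nat.add_mul_mod_self_left, Nat.mod_eq_of_lt hr]


lemma sub_mul_key {t a c : ℕ} (hc : c ≤ a / t) :
    (a / t - c) * t + (c * t + a % t) = a := by
  have h := Nat.div_add_mod a t
  have hle : c * t ≤ a / t * t := Nat.mul_le_mul_right t hc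
  rw [tsub_mul, ← add_assoc, Nat.sub_add_cancel hle, mul_comm (a / t) t, h]

end Stmt19Aux

/-- Kolitsch's characterization: `λ` is a `t`-core iff in its `t`-colored Frobenius
partition (top entries `q_i = a_i / t` with color `r_i = a_i % t`, bottom entries
`q'_j = b_j / t` with color `r'_j = t - 1 - b_j % t`) no color appears in both rows,
and whenever a value appears with some color in a row, all smaller values with the same
color appear in that row. -/
theorem stmt19 (t : ℕ) (ht : 0 < t) (f : ℕ → ℕ) (hf : IsPartition f) :
    IsTCore t f ↔
      ((∀ i j, i < durfee f → j < durfee f →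
          frobA f i % t ≠ t - 1 - frobB f j % t) ∧
       (∀ i c, i < durfee f → c < frobA f i / t →
          ∃ k, k < durfee f ∧ frobA f k / t = c ∧ frobA f k % t = frobA f i % t) ∧
       (∀ j c, j < durfee f → c < frobB f j / t →
          ∃ k, k < durfee f ∧ frobB f k / t = c ∧ frobB f k % t = frobB f j % t)) := by
  open Stmt19Aux in
  constructor
  · rintro ⟨-, hcore⟩
    have hcl := (core_iff_cl hf ht).mp hcore
    refine ⟨?_, ?_, ?_⟩
    · -- no color in both rows
      intro i j hi hj heq
      have hpa := frobA_cast hf hi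
      have hpb := frobB_cast hf hj
      have hbox : j < f i := by
        have hd1 : durfee f - 1 < durfee f := by omega
        have h1 := (durfee_lt hf _).mp hd1
        have h2 : j < f (durfee f - 1) := by omega
        have h3 := (galois hf (durfee f - 1) j).mpr h2
        exact (galois hf i j).mp (by omega)
      apply hcore i j hbox
      have hc := hook_cast hf hbox
      have hook_nat : hook f i j = frobA f i + frobB f j + 1 := by
        rw [← Nat.cast_inj (R := ℤ)]
        rw [hc]; push_cast; omega
      rw [hook_nat]
      set a := frobA f i
      set b := frobB f j
      have hbt : b % t < t := Nat.mod_lt _ ht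
      have hrs : a % t + b % t + 1 = t := by omega
      refine ⟨a / t + b / t + 1, ?_⟩
      calc a + b + 1 = (t * (a / t) + a % t) + (t * (b / t) + b % t) + 1 := by
            rw [Nat.div_add_mod, Nat.div_add_mod]
        _ = t * (a / t) + t * (b / t) + (a % t + b % t + 1) := by ring
        _ = t * (a / t) + t * (b / t) + t * 1 := by rw [hrs, Nat.mul_one]
        _ = t * (a / t + b / t + 1) := by ring
    · -- top row closure
      intro i c hi hc
      obtain ⟨k, hk⟩ := cl_iter hcl (frobA f i / t - c) i
      have hpa := frobA_cast hf hi
      have key := sub_mul_key (t := t) (a := frobA f i) (c := c) hc.le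
      have keyZ : ((frobA f i / t - c : ℕ) : ℤ) * t
          + ((c * t + frobA f i % t : ℕ) : ℤ) = (frobA f i : ℤ) := by
        exact_mod_cast key
      have hk' : pI f k = ((c * t + frobA f i % t : ℕ) : ℤ) := by
        rw [hk, ← hpa]; linarith [keyZ]
      have hkd := pos_lt_durfee hf (by rw [hk']; exact Int.natCast_nonneg _)
      have hfa : frobA f k = c * t + frobA f i % t := by
        have h := frobA_cast hf hkd
        rw [hk'] at h
        exact_mod_cast h
      obtain ⟨hd, hm⟩ := div_mod_aux ht c (frobA f i % t) (Nat.mod_lt _ ht)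
      exact ⟨k, hkd, by rw [hfa, hd], by rw [hfa, hm]⟩
    · -- bottom row closure
      intro j c hj hc
      obtain ⟨k, hk⟩ := qcl_iter hf hcl (frobB f j / t - c) j
      have hpb := frobB_cast hf hj
      have key := sub_mul_key (t := t) (a := frobB f j) (c := c) hc.le
      have keyZ : ((frobB f j / t - c : ℕ) : ℤ) * t
          + ((c * t + frobB f j % t : ℕ) : ℤ) = (frobB f j : ℤ) := by
        exact_mod_cast key
      have hqj : qI f j = -(frobB f j : ℤ) - 1 := by omega
      have hk' : qI f k = -((c * t + frobB f j % t : ℕ) : ℤ) - 1 := by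
        rw [hk, hqj]; linarith [keyZ]
      have hkd : k < durfee f := neg_lt_durfee hf (by
        rw [hk']
        have := Int.natCast_nonneg (c * t + frobB f j % t)
        omega)
      have hfb : frobB f k = c * t + frobB f j % t := by
        have h := frobB_cast hf hkd
        rw [hk'] at h
        have h2 : (frobB f k : ℤ) = ((c * t + frobB f j % t : ℕ) : ℤ) := by omega
        exact_mod_cast h2
      obtain ⟨hd, hm⟩ := div_mod_aux ht c (frobB f j % t) (Nat.mod_lt _ ht)
      exact ⟨k, hkd, by rw [hfb, hd], by rw [hfb, hm]⟩
  · rintro ⟨h1, h2, h3⟩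
    refine ⟨hf, (core_iff_cl hf ht).mpr ?_⟩
    intro i
    have htz : (0:ℤ) < t := by exact_mod_cast ht
    by_cases hi : i < durfee f
    · have hpa := frobA_cast hf hi
      by_cases hat : t ≤ frobA f i
      · have h1t : 1 ≤ frobA f i / t := (Nat.one_le_div_iff ht).mpr hat
        obtain ⟨k, hkd, hdiv, hmod⟩ := h2 i (frobA f i / t - 1) hi (by omega)
        refine ⟨k, ?_⟩
        have key := sub_mul_key (t := t) (a := frobA f i) (c := frobA f i / t - 1)
          (by omega)
        have hsub : frobA f i / t - (frobA f i / t - 1) = 1 := by omega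
        rw [hsub, one_mul] at key
        have e1 := Nat.div_add_mod (frobA f k) t
        rw [hdiv, hmod, mul_comm] at e1
        rw [e1] at key
        -- key : t + frobA f k = frobA f i
        have hkZ : (frobA f k : ℤ) = (frobA f i : ℤ) - t := by omega
        rw [← frobA_cast hf hkd, hkZ, hpa]
      · push_neg at hat
        rcases pq_cover hf (pI f i - t) with h | ⟨j, hjq⟩
        · exact h
        · exfalso
          have hjneg : qI f j < 0 := by
            rw [hjq, ← hpa]
            have h0 : (0:ℤ) ≤ (frobA f i : ℤ) := Int.natCast_nonneg _
            have hlt : (frobA f i : ℤ) < t := by exact_mod_cast hat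
            omega
          have hjd := neg_lt_durfee hf hjneg
          have hpb := frobB_cast hf hjd
          have hab : frobA f i + frobB f j + 1 = t := by
            rw [← hpa] at hjq
            omega
          apply h1 i j hi hjd
          have hbt : frobB f j < t := by omega
          rw [Nat.mod_eq_of_lt hat, Nat.mod_eq_of_lt hbt]
          omega
    · rcases pq_cover hf (pI f i - t) with h | ⟨j, hjq⟩
      · exact h
      · exfalso
        have hineg : pI f i < 0 := by
          have hni : ¬ i < f i := fun h => hi ((durfee_lt hf i).mpr h)
          simp only [pI]; omega
        have hjneg : qI f j < 0 := by rw [hjq]; omega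
        have hjd := neg_lt_durfee hf hjneg
        have hpb := frobB_cast hf hjd
        have hbt : t ≤ frobB f j := by omega
        have h1t : 1 ≤ frobB f j / t := (Nat.one_le_div_iff ht).mpr hbt
        obtain ⟨k, hkd, hdiv, hmod⟩ := h3 j (frobB f j / t - 1) hjd (by omega)
        have key := sub_mul_key (t := t) (a := frobB f j) (c := frobB f j / t - 1)
          (by omega)
        have hsub : frobB f j / t - (frobB f j / t - 1) = 1 := by omega
        rw [hsub, one_mul] at key
        have e1 := Nat.div_add_mod (frobB f k) t
        rw [hdiv, hmod, mul_comm] at e1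
        rw [e1] at key
        -- key : t + frobB f k = frobB f j
        have hpbk := frobB_cast hf hkd
        apply pq_disjoint hf i k
        omega
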